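/- arXiv:2303.00228 — 3 statements merged into one kernel-verified Lean document; each statement's English description precedes it below -/
import Mathlib

section
/- (Laplace mechanism is ε-differentially private.) Let ε > 0, Δ > 0, n ≥ 1, and set λ = Δ/ε. Let μ be the product measure on ℝⁿ of n independent Laplace(λ) measures. Then for all a, b ∈ ℝⁿ with ‖a − b‖₁ ≤ Δ and every measurable set S ⊆ ℝⁿ, (μ.map(x ↦ x + a))(S) ≤ exp(ε) · (μ.map(x ↦ x + b))(S). In other words, the translated noise laws corresponding to query outputs with ℓ1 distance at most Δ satisfy the ε-DP inequality. -/
open MeasureTheory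

/-- The Laplace measure with scale `λ` on `ℝ`: the probability measure with density
`x ↦ (1/(2λ))·exp(−|x|/λ)` with respect to Lebesgue measure. -/
noncomputable def laplaceMeasure (lam : ℝ) : Measure ℝ :=
  volume.withDensity fun x => ENNReal.ofReal ((1 / (2 * lam)) * Real.exp (-|x| / lam))

open ENNReal

lemma lintegral_pi_prod' {n : ℕ} (f : Fin n → ℝ → ℝ≥0∞) (hf : ∀ i, Measurable (f i)) :
    ∫⁻ x : Fin n → ℝ, ∏ i, f i (x i) ∂(Measure.pi fun _ => volume) = ∏ i, ∫⁻ x, f i x := by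
  induction n with
  | zero => simp [lintegral_const, Measure.pi_univ]
  | succ n ih =>
    have hmp := (MeasureTheory.measurePreserving_piFinSuccAbove
      (fun _ : Fin (n+1) => (volume : Measure ℝ)) 0).symm
    have he := (MeasurableEquiv.piFinSuccAbove (fun _ : Fin (n+1) => ℝ) 0).symm.measurableEmbedding
    rw [← hmp.lintegral_comp_emb he (fun x => ∏ i, f i (x i))]
    have : ∀ p : ℝ × (Fin n → ℝ),
        (∏ i, f i ((MeasurableEquiv.piFinSuccAbove (fun _ : Fin (n+1) => ℝ) 0).symm p i))
        = f 0 p.1 * ∏ j, f j.succ (p.2 j) := by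
      intro p
      rw [Fin.prod_univ_succ]
      simp [MeasurableEquiv.piFinSuccAbove_symm_apply, Fin.insertNth_zero,
        Fin.zero_succAbove, Fin.cons_zero, Fin.cons_succ]
    simp_rw [this]
    rw [lintegral_prod_mul (f := f 0) (g := fun z : Fin n → ℝ => ∏ j, f j.succ (z j))
      (hf 0).aemeasurable
      (Finset.measurable_prod Finset.univ (fun j _ => (hf j.succ).comp (measurable_pi_apply j))).aemeasurable]
    rw [ih (fun j => f j.succ) (fun j => hf j.succ), Fin.prod_univ_succ]

lemma pi_withDensity' {n : ℕ} (g : Fin n → ℝ → ℝ≥0∞) (hg : ∀ i, Measurable (g i))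
    [∀ i, SigmaFinite (volume.withDensity (g i))] :
    (Measure.pi fun i : Fin n => volume.withDensity (g i)) =
      (Measure.pi fun _ : Fin n => (volume : Measure ℝ)).withDensity
        (fun x => ∏ i, g i (x i)) := by
  refine Measure.pi_eq fun s hs => ?_
  rw [withDensity_apply _ (MeasurableSet.univ_pi hs)]
  rw [← lintegral_indicator (MeasurableSet.univ_pi hs)]
  have : ∀ x : Fin n → ℝ, (Set.univ.pi s).indicator (fun y => ∏ i, g i (y i)) x
      = ∏ i, (s i).indicator (g i) (x i) := by
    intro x
    by_cases hx : x ∈ Set.univ.pi s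
    · rw [Set.indicator_of_mem hx]
      exact Finset.prod_congr rfl fun i _ =>
        (Set.indicator_of_mem (hx i (Set.mem_univ i)) _).symm
    · rw [Set.indicator_of_notMem hx]
      obtain ⟨i, hi⟩ : ∃ i, x i ∉ s i := by simpa [Set.mem_pi] using hx
      exact (Finset.prod_eq_zero (Finset.mem_univ i)
        (by rw [Set.indicator_of_notMem hi])).symm
  simp_rw [this]
  rw [lintegral_pi_prod' _ (fun i => (hg i).indicator (hs i))]
  exact (Finset.prod_congr rfl fun i _ => by
    rw [lintegral_indicator (hs i), withDensity_apply _ (hs i)]).symm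

/-- The Laplace mechanism with scale `λ = Δ/ε` is `ε`-differentially private: for outputs
`a, b` with `‖a − b‖₁ ≤ Δ`, the translated product-Laplace noise laws satisfy the
`ε`-DP inequality. -/
theorem laplace_mechanism_eps_DP
    {n : ℕ} (hn : 1 ≤ n) (ε Δ : ℝ) (hε : 0 < ε) (hΔ : 0 < Δ)
    (lam : ℝ) (hlam : lam = Δ / ε)
    (μ : Measure (Fin n → ℝ))
    (hμ : μ = Measure.pi fun _ : Fin n => laplaceMeasure lam)
    (a b : Fin n → ℝ) (hab : ∑ i, |a i - b i| ≤ Δ)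
    (S : Set (Fin n → ℝ)) (hS : MeasurableSet S) :
    (μ.map fun x => x + a) S ≤ ENNReal.ofReal (Real.exp ε) * (μ.map fun x => x + b) S := by
  have hlam0 : 0 < lam := hlam ▸ div_pos hΔ hε
  set c : ℝ := 1 / (2 * lam) with hc
  have hc0 : 0 ≤ c := by positivity
  set g : ℝ → ℝ≥0∞ := fun x => ENNReal.ofReal (c * Real.exp (-|x| / lam)) with hgdef
  have hg : Measurable g := by
    apply ENNReal.measurable_ofReal.comp
    fun_prop
  -- sigma-finiteness
  have hgle : ∀ x, g x ≤ ENNReal.ofReal c := by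
    intro x
    apply ENNReal.ofReal_le_ofReal
    calc c * Real.exp (-|x| / lam) ≤ c * 1 := by
          apply mul_le_mul_of_nonneg_left _ hc0
          rw [← Real.exp_zero]
          apply Real.exp_le_exp.2
          apply div_nonpos_of_nonpos_of_nonneg (neg_nonpos.2 (abs_nonneg x)) hlam0.le
      _ = c := mul_one c
  haveI hsf : ∀ i : Fin n, SigmaFinite (volume.withDensity g) := by
    intro _
    refine Measure.sigmaFinite_of_le (c.toNNReal • (volume : Measure ℝ)) ?_
    rw [ENNReal.smul_def, ← withDensity_const]
    refine withDensity_mono (Filter.Eventually.of_forall fun x => ?_)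
    simpa [ENNReal.ofReal] using hgle x
  have hlap : laplaceMeasure lam = volume.withDensity g := rfl
  -- density of the product measure
  set F : (Fin n → ℝ) → ℝ≥0∞ := fun x => ∏ i, g (x i) with hF
  have hFm : Measurable F :=
    Finset.measurable_prod Finset.univ fun i _ => hg.comp (measurable_pi_apply i)
  have hμF : μ = (volume : Measure (Fin n → ℝ)).withDensity F := by
    rw [hμ]
    simp only [hlap]
    rw [pi_withDensity' (fun _ => g) (fun _ => hg), volume_pi]
  -- translated measure as a set-lintegral
  have key : ∀ v : Fin n → ℝ,
      (μ.map fun x => x + v) S = ∫⁻ y in S, F (y - v) ∂(volume : Measure (Fin n → ℝ)) := by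
    intro v
    rw [Measure.map_apply (measurable_add_const v) hS, hμF,
      withDensity_apply _ ((measurable_add_const v) hS)]
    have hmp : MeasurePreserving (fun y : Fin n → ℝ => y - v) volume volume :=
      measurePreserving_sub_right volume v
    have hpre : (fun y : Fin n → ℝ => y - v) ⁻¹' ((fun x => x + v) ⁻¹' S) = S := by
      ext y; simp
    have := hmp.setLIntegral_comp_preimage (s := (fun x : Fin n → ℝ => x + v) ⁻¹' S)
      ((measurable_add_const v) hS) hFm
    rw [hpre] at this
    exact this.symm
  rw [key a, key b]
  -- pointwise density comparison
  have hpoint : ∀ y : Fin n → ℝ, F (y - a) ≤ ENNReal.ofReal (Real.exp ε) * F (y - b) := by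
    intro y
    have hfac : ∀ i : Fin n, g (y i - a i) ≤
        ENNReal.ofReal (Real.exp (|a i - b i| / lam)) * g (y i - b i) := by
      intro i
      rw [hgdef]
      rw [← ENNReal.ofReal_mul (Real.exp_nonneg _)]
      apply ENNReal.ofReal_le_ofReal
      rw [mul_comm (Real.exp _), mul_assoc, ← Real.exp_add]
      apply mul_le_mul_of_nonneg_left _ hc0
      apply Real.exp_le_exp.2
      rw [← add_div, div_le_div_iff_of_pos_right hlam0]
      have htri : |y i - b i| ≤ |y i - a i| + |a i - b i| := by
        calc |y i - b i| = |(y i - a i) + (a i - b i)| := by ring_nf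
          _ ≤ |y i - a i| + |a i - b i| := abs_add_le _ _
      linarith
    calc F (y - a) = ∏ i, g (y i - a i) := by simp [hF, Pi.sub_apply]
      _ ≤ ∏ i, (ENNReal.ofReal (Real.exp (|a i - b i| / lam)) * g (y i - b i)) :=
          Finset.prod_le_prod' fun i _ => hfac i
      _ = (∏ i, ENNReal.ofReal (Real.exp (|a i - b i| / lam))) * ∏ i, g (y i - b i) :=
          Finset.prod_mul_distrib
      _ ≤ ENNReal.ofReal (Real.exp ε) * F (y - b) := by
          apply mul_le_mul' _ (by simp [hF, Pi.sub_apply])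
          rw [← ENNReal.ofReal_prod_of_nonneg (fun i _ => Real.exp_nonneg _),
            ← Real.exp_sum]
          apply ENNReal.ofReal_le_ofReal
          apply Real.exp_le_exp.2
          have : ∑ i, |a i - b i| / lam = (∑ i, |a i - b i|) / lam := by
            rw [Finset.sum_div]
          rw [this]
          have hΔlam : Δ / lam = ε := by
            rw [hlam]; field_simp
          calc (∑ i, |a i - b i|) / lam ≤ Δ / lam :=
              div_le_div_of_nonneg_right hab hlam0.le
            _ = ε := hΔlam
  calc ∫⁻ y in S, F (y - a) ∂volume ≤ ∫⁻ y in S, ENNReal.ofReal (Real.exp ε) * F (y - b) ∂volume :=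
        lintegral_mono fun y => hpoint y
    _ = ENNReal.ofReal (Real.exp ε) * ∫⁻ y in S, F (y - b) ∂volume :=
        lintegral_const_mul _ (hFm.comp (measurable_sub_const b))
end

section
/- (Normalizing constant of the conditional Laplace mechanism for n = 3.) For every λ > 0, the double integral over ℝ² of exp(−(|u₁| + |u₂| + |u₁ + u₂|)/λ) with respect to Lebesgue measure equals (3/2)·λ², i.e., ∫∫_{ℝ²} exp(−(|u₁| + |u₂| + |u₁+u₂|)/λ) du₁ du₂ = (3/2)·λ². -/
open MeasureTheory Set

namespace CLN

/-- exp integral on Ioi. -/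
lemma I1 {b : ℝ} (hb : 0 < b) (a : ℝ) :
    ∫ x in Ioi a, Real.exp (-(b * x)) = Real.exp (-(b * a)) / b := by
  have h := integral_comp_mul_left_Ioi (fun x => Real.exp (-x)) a hb
  rw [integral_exp_neg_Ioi] at h
  simpa [smul_eq_mul, div_eq_mul_inv, mul_comm] using h

lemma I2 {b : ℝ} (hb : 0 < b) :
    ∫ x in Ioi (0:ℝ), x * Real.exp (-(b * x)) = 1 / b ^ 2 := by
  have h := Real.integral_rpow_mul_exp_neg_mul_Ioi (a := 2) (r := b) two_pos hb
  have h2 : ∀ t ∈ Ioi (0:ℝ), t ^ ((2:ℝ) - 1) * Real.exp (-(b * t))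
      = t * Real.exp (-(b * t)) := by
    intro t ht
    norm_num
  rw [setIntegral_congr_fun measurableSet_Ioi h2] at h
  rw [h, Real.Gamma_two, mul_one, show (2:ℝ) = ((2:ℕ):ℝ) from by norm_num,
    Real.rpow_natCast, div_pow]
  norm_num

lemma J1 {b : ℝ} (hb : 0 < b) (a : ℝ) :
    IntegrableOn (fun x => Real.exp (-(b * x))) (Ioi a) := by
  simpa [neg_mul] using exp_neg_integrableOn_Ioi a hb

lemma J2 {b : ℝ} (hb : 0 < b) :
    IntegrableOn (fun x => x * Real.exp (-(b * x))) (Ioi (0:ℝ)) := by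
  have h := Real.GammaIntegral_convergent (s := 2) two_pos
  have h' : IntegrableOn (fun x : ℝ => x * Real.exp (-x)) (Ioi (0:ℝ)) := by
    refine h.congr_fun (fun x hx => ?_) measurableSet_Ioi
    norm_num [mul_comm]
  have h2 := (integrableOn_Ioi_comp_mul_left_iff
      (fun x : ℝ => x * Real.exp (-x)) 0 hb).2 (by simpa using h')
  have h3 : IntegrableOn (fun x : ℝ => (b * x) * Real.exp (-(b * x))) (Ioi (0:ℝ)) := by
    simpa using h2
  have h4 : IntegrableOn (fun x : ℝ => (1/b) * ((b * x) * Real.exp (-(b * x)))) (Ioi (0:ℝ)) :=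
    h3.const_mul (1/b)
  refine h4.congr_fun (fun x hx => ?_) measurableSet_Ioi
  field_simp

/-- comp-neg integrability transfer. -/
lemma JNeg {f : ℝ → ℝ} {c : ℝ} (hf : IntegrableOn f (Ici (-c))) :
    IntegrableOn (fun x => f (-x)) (Iic c) := by
  have A : MeasurableEmbedding fun x : ℝ => -x :=
    (Homeomorph.neg ℝ).isClosedEmbedding.measurableEmbedding
  have key : (volume : Measure ℝ).restrict (Iic c)
      = (volume.restrict (Ici (-c))).map (fun x : ℝ => -x) := by
    rw [show (Ici (-c)) = (fun x : ℝ => -x) ⁻¹' (Iic c) by ext x; simp [neg_le]]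
    rw [← Measure.restrict_map measurable_neg measurableSet_Iic,
      Measure.map_neg_eq_self]
  rw [IntegrableOn, key, A.integrable_map_iff]
  simpa [Function.comp_def, IntegrableOn] using hf


lemma inner_nonneg {l : ℝ} (hl : 0 < l) {a : ℝ} (ha : 0 ≤ a) :
    ∫ y : ℝ, Real.exp (-(|y| + |a + y|) / l) = (l + a) * Real.exp (-(a / l)) := by
  have hb : (0:ℝ) < 2 / l := by positivity
  set f : ℝ → ℝ := fun y => Real.exp (-(|y| + |a + y|) / l) with hf
  have e3 : ∀ y ∈ Ioi (0:ℝ), f y = Real.exp (-(a / l)) * Real.exp (-(2 / l * y)) := by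
    intro y hy
    rw [hf]
    simp only []
    rw [abs_of_pos hy, abs_of_nonneg (by simp at hy; linarith), ← Real.exp_add]
    congr 1
    field_simp
    ring
  have e2 : ∀ y ∈ Ioc (-a) (0:ℝ), f y = Real.exp (-(a / l)) := by
    intro y hy
    rw [hf]
    simp only []
    rw [abs_of_nonpos hy.2, abs_of_nonneg (by have := hy.1; linarith)]
    congr 1
    ring
  have e1 : ∀ x ∈ Ioi a, f (-x) = Real.exp (a / l) * Real.exp (-(2 / l * x)) := by
    intro x hx
    simp only [hf] at *
    rw [abs_of_nonpos (by simp at hx ⊢; linarith), abs_of_nonpos (by simp at hx ⊢; linarith),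
      ← Real.exp_add]
    congr 1
    field_simp
    ring
  have hI3 : IntegrableOn f (Ioi (0:ℝ)) := by
    have hg : IntegrableOn (fun y => Real.exp (-(a / l)) * Real.exp (-(2 / l * y))) (Ioi (0:ℝ)) :=
      (J1 hb 0).const_mul _
    exact hg.congr_fun (fun y hy => (e3 y hy).symm) measurableSet_Ioi
  have hI2 : IntegrableOn f (Ioc (-a) (0:ℝ)) := by
    have hg : IntegrableOn (fun _ => Real.exp (-(a / l))) (Ioc (-a) (0:ℝ)) :=
      integrableOn_const measure_Ioc_lt_top.ne
    exact hg.congr_fun (fun y hy => (e2 y hy).symm) measurableSet_Ioc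
  have hI1 : IntegrableOn f (Iic (-a)) := by
    have hg : IntegrableOn (fun x => Real.exp (a / l) * Real.exp (-(2 / l * x))) (Ici a) :=
      (integrableOn_Ici_iff_integrableOn_Ioi enorm_ne_top).2 ((J1 hb a).const_mul _)
    have := JNeg (c := -a) (by simpa using hg)
    refine this.congr_fun (fun y hy => ?_) measurableSet_Iic
    simp only [hf]
    rw [abs_of_nonpos (by simp at hy ⊢; linarith), abs_of_nonpos (by simp at hy ⊢; linarith),
      ← Real.exp_add]
    congr 1
    field_simp
    ring
  have v3 : ∫ y in Ioi (0:ℝ), f y = Real.exp (-(a / l)) * (l / 2) := by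
    rw [setIntegral_congr_fun measurableSet_Ioi e3, integral_const_mul, I1 hb 0]
    congr 1
    rw [mul_zero, neg_zero, Real.exp_zero]
    rw [one_div, inv_div]
  have v2 : ∫ y in Ioc (-a) (0:ℝ), f y = a * Real.exp (-(a / l)) := by
    rw [setIntegral_congr_fun measurableSet_Ioc e2, setIntegral_const, smul_eq_mul,
      measureReal_def, Real.volume_Ioc]
    congr 1
    rw [sub_neg_eq_add, zero_add, ENNReal.toReal_ofReal ha]
  have v1 : ∫ y in Iic (-a), f y = Real.exp (-(a / l)) * (l / 2) := by
    rw [← integral_comp_neg_Ioi, setIntegral_congr_fun measurableSet_Ioi e1,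
      integral_const_mul, I1 hb a]
    rw [mul_div_assoc', ← Real.exp_add,
      show a / l + -(2 / l * a) = -(a / l) by field_simp; ring,
      div_div_eq_mul_div, mul_div_assoc]
  have hIic0 : IntegrableOn f (Iic (0:ℝ)) := by
    have h := hI1.union hI2
    rwa [Iic_union_Ioc_eq_Iic (by linarith : -a ≤ (0:ℝ))] at h
  have hsplit : ∫ y : ℝ, f y = (∫ y in Iic (0:ℝ), f y) + ∫ y in Ioi (0:ℝ), f y :=
    (intervalIntegral.integral_Iic_add_Ioi hIic0 hI3).symm
  have h5 := setIntegral_union (Iic_disjoint_Ioc (le_refl (-a))) measurableSet_Ioc hI1 hI2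
  rw [Iic_union_Ioc_eq_Iic (by linarith : -a ≤ (0:ℝ))] at h5
  rw [hsplit, h5, v1, v2, v3]
  ring


lemma inner_general {l : ℝ} (hl : 0 < l) (a : ℝ) :
    ∫ y : ℝ, Real.exp (-(|y| + |a + y|) / l) = (l + |a|) * Real.exp (-(|a| / l)) := by
  rcases le_or_gt 0 a with h | h
  · rw [abs_of_nonneg h]; exact inner_nonneg hl h
  · have key : ∫ y : ℝ, Real.exp (-(|y| + |a + y|) / l)
        = ∫ y : ℝ, Real.exp (-(|y| + |(-a) + y|) / l) := by
      rw [← integral_neg_eq_self (fun y => Real.exp (-(|y| + |(-a) + y|) / l))]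
      congr 1
      funext y
      rw [abs_neg (α := ℝ) y |>.symm]
      congr 3
      rw [show -a + -y = -(a + y) by ring, abs_neg, abs_neg]
    rw [key, inner_nonneg hl (by linarith : (0:ℝ) ≤ -a), abs_of_neg h]

lemma KAbs {b : ℝ} (hb : 0 < b) : Integrable (fun x : ℝ => Real.exp (-(b * |x|))) := by
  rw [← integrableOn_univ, ← Iic_union_Ioi (a := (0:ℝ))]
  refine IntegrableOn.union ?_ ?_
  · have hg : IntegrableOn (fun x => Real.exp (-(b * x))) (Ici (-(0:ℝ))) := by
      simpa using (integrableOn_Ici_iff_integrableOn_Ioi (by simp)).2 (J1 hb 0)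
    exact (JNeg hg).congr_fun
      (fun x hx => by rw [abs_of_nonpos hx]) measurableSet_Iic
  · exact (J1 hb 0).congr_fun
      (fun x hx => by rw [abs_of_pos hx]) measurableSet_Ioi

lemma outer_Ioi {l : ℝ} (hl : 0 < l) :
    ∫ x in Ioi (0:ℝ),
      Real.exp (-(|x| / l)) * ((l + |x|) * Real.exp (-(|x| / l))) = 3 / 4 * l ^ 2 := by
  have hb : (0:ℝ) < 2 / l := by positivity
  have hEq : ∀ x ∈ Ioi (0:ℝ), Real.exp (-(|x| / l)) * ((l + |x|) * Real.exp (-(|x| / l)))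
      = l * Real.exp (-(2 / l * x)) + x * Real.exp (-(2 / l * x)) := by
    intro x hx
    rw [abs_of_pos hx]
    have h2 : Real.exp (-(x / l)) * Real.exp (-(x / l)) = Real.exp (-(2 / l * x)) := by
      rw [← Real.exp_add]; congr 1; field_simp; ring
    calc Real.exp (-(x / l)) * ((l + x) * Real.exp (-(x / l)))
        = (l + x) * (Real.exp (-(x / l)) * Real.exp (-(x / l))) := by ring
      _ = (l + x) * Real.exp (-(2 / l * x)) := by rw [h2]
      _ = l * Real.exp (-(2 / l * x)) + x * Real.exp (-(2 / l * x)) := by ring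
  rw [setIntegral_congr_fun measurableSet_Ioi hEq]
  have hint1 : IntegrableOn (fun x => l * Real.exp (-(2 / l * x))) (Ioi (0:ℝ)) :=
    (J1 hb 0).const_mul l
  rw [integral_add hint1 (J2 hb), integral_const_mul, I1 hb 0, I2 hb]
  rw [mul_zero, neg_zero, Real.exp_zero]
  field_simp
  ring

lemma outer_int_Ioi {l : ℝ} (hl : 0 < l) :
    IntegrableOn (fun x : ℝ =>
      Real.exp (-(|x| / l)) * ((l + |x|) * Real.exp (-(|x| / l)))) (Ioi (0:ℝ)) := by
  have hb : (0:ℝ) < 2 / l := by positivity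
  have hg : IntegrableOn
      (fun x => l * Real.exp (-(2 / l * x)) + x * Real.exp (-(2 / l * x))) (Ioi (0:ℝ)) :=
    ((J1 hb 0).const_mul l).add (J2 hb)
  refine hg.congr_fun (fun x hx => ?_) measurableSet_Ioi
  rw [abs_of_pos hx]
  have h2 : Real.exp (-(x / l)) * Real.exp (-(x / l)) = Real.exp (-(2 / l * x)) := by
    rw [← Real.exp_add]; congr 1; field_simp; ring
  calc l * Real.exp (-(2 / l * x)) + x * Real.exp (-(2 / l * x))
      = (l + x) * Real.exp (-(2 / l * x)) := by ring
    _ = (l + x) * (Real.exp (-(x / l)) * Real.exp (-(x / l))) := by rw [h2]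
    _ = Real.exp (-(x / l)) * ((l + x) * Real.exp (-(x / l))) := by ring

lemma outer_total {l : ℝ} (hl : 0 < l) :
    ∫ x : ℝ, Real.exp (-(|x| / l)) * ((l + |x|) * Real.exp (-(|x| / l))) = 3 / 2 * l ^ 2 := by
  set H : ℝ → ℝ := fun x => Real.exp (-(|x| / l)) * ((l + |x|) * Real.exp (-(|x| / l))) with hH
  have hIoi : IntegrableOn H (Ioi (0:ℝ)) := outer_int_Ioi hl
  have hIic : IntegrableOn H (Iic (0:ℝ)) := by
    have hIci : IntegrableOn H (Ici (-(0:ℝ))) := by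
      simpa using (integrableOn_Ici_iff_integrableOn_Ioi (by simp)).2 hIoi
    refine (JNeg hIci).congr_fun (fun x hx => ?_) measurableSet_Iic
    simp only [hH, abs_neg]
  have hIicVal : ∫ x in Iic (0:ℝ), H x = 3 / 4 * l ^ 2 := by
    have h := integral_comp_neg_Ioi 0 H
    rw [neg_zero] at h
    rw [← h]
    have : ∀ x ∈ Ioi (0:ℝ), H (-x) = H x := by
      intro x hx; simp only [hH, abs_neg]
    rw [setIntegral_congr_fun measurableSet_Ioi this]
    exact outer_Ioi hl
  rw [← intervalIntegral.integral_Iic_add_Ioi hIic hIoi, hIicVal, outer_Ioi hl]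
  ring

end CLN

open CLN in
/-- Normalizing constant of the conditional Laplace mechanism for `n = 3`:
`∫∫_{ℝ²} exp(−(|u₁| + |u₂| + |u₁+u₂|)/λ) du₁ du₂ = (3/2)·λ²`. -/
theorem conditional_laplace_normalizer
    (lam : ℝ) (hlam : 0 < lam) :
    ∫ u : ℝ × ℝ, Real.exp (-(|u.1| + |u.2| + |u.1 + u.2|) / lam)
      = 3 / 2 * lam ^ 2 := by
  have hb1 : (0:ℝ) < 1 / lam := by positivity
  have hG : Integrable (fun u : ℝ × ℝ =>
      Real.exp (-(1 / lam * |u.1|)) * Real.exp (-(1 / lam * |u.2|))) (volume.prod volume) :=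
    (KAbs hb1).mul_prod (KAbs hb1)
  have hFm : AEStronglyMeasurable
      (fun u : ℝ × ℝ => Real.exp (-(|u.1| + |u.2| + |u.1 + u.2|) / lam))
      (volume.prod volume) := by
    apply Continuous.aestronglyMeasurable
    apply Real.continuous_exp.comp
    exact (((continuous_fst.abs.add continuous_snd.abs).add
      (continuous_fst.add continuous_snd).abs).neg).div_const lam
  have hFi : Integrable (fun u : ℝ × ℝ => Real.exp (-(|u.1| + |u.2| + |u.1 + u.2|) / lam))
      (volume.prod volume) := by
    refine hG.mono hFm (Filter.Eventually.of_forall fun u => ?_)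
    rw [Real.norm_eq_abs, Real.norm_eq_abs, abs_of_pos (Real.exp_pos _),
      abs_of_pos (mul_pos (Real.exp_pos _) (Real.exp_pos _))]
    rw [← Real.exp_add]
    apply Real.exp_le_exp.2
    rw [show -(1 / lam * |u.1|) + -(1 / lam * |u.2|) = -(|u.1| + |u.2|) / lam by
      field_simp; ring]
    rw [div_le_div_iff_of_pos_right hlam]
    have := abs_nonneg (u.1 + u.2)
    linarith
  rw [Measure.volume_eq_prod ℝ ℝ, integral_prod _ hFi]
  have inner : ∀ x : ℝ, (∫ y : ℝ, Real.exp (-(|x| + |y| + |x + y|) / lam))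
      = Real.exp (-(|x| / lam)) * ((lam + |x|) * Real.exp (-(|x| / lam))) := by
    intro x
    have step : (fun y : ℝ => Real.exp (-(|x| + |y| + |x + y|) / lam))
        = fun y => Real.exp (-(|x| / lam)) * Real.exp (-(|y| + |x + y|) / lam) := by
      funext y
      rw [← Real.exp_add]
      congr 1
      field_simp
      ring
    rw [step, integral_const_mul, inner_general hlam x]
  calc ∫ x : ℝ, ∫ y : ℝ, Real.exp (-(|x| + |y| + |x + y|) / lam)
      = ∫ x : ℝ, Real.exp (-(|x| / lam)) * ((lam + |x|) * Real.exp (-(|x| / lam))) := by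
        congr 1
        funext x
        exact inner x
    _ = 3 / 2 * lam ^ 2 := outer_total hlam
end

section
/- (Marginal density and variance of the conditional Laplace mechanism for n = 3.) Let λ > 0. Then: (1) for every u₁ ∈ ℝ, ∫_ℝ exp(−(|u₁| + |u₂| + |u₁ + u₂|)/λ) du₂ = (λ + |u₁|)·exp(−2|u₁|/λ); (2) the function h(u) = (2/(3λ²))·(λ + |u|)·exp(−2|u|/λ) is a probability density on ℝ (∫_ℝ h(u) du = 1), and its second moment satisfies ∫_ℝ u²·h(u) du = (5/6)·λ². Consequently the marginal variance of the conditioned Laplace mechanism at n = 3 is (5/6)λ², which is smaller than the corresponding marginal variance 2λ²(1 − 1/3) = (4/3)λ² of the imaged (L2-projected) mechanism. -/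
open MeasureTheory Set Filter

open scoped Topology

private lemma aux_tendsto (n : ℕ) {b : ℝ} (hb : 0 < b) :
    Tendsto (fun x : ℝ => x ^ n * Real.exp (-(b * x))) atTop (𝓝 0) := by
  have h := tendsto_rpow_mul_exp_neg_mul_atTop_nhds_zero n b hb
  simpa [Real.rpow_natCast, neg_mul] using h

/-- Master lemma: integral of a cubic polynomial times a decaying exponential over `Ioi c`,
together with integrability. -/
private lemma master {b : ℝ} (hb : 0 < b) (c p q r s : ℝ)
    (hpos : ∀ x ∈ Ioi c, 0 ≤ p + q * x + r * x ^ 2 + s * x ^ 3) :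
    (∫ x in Ioi c, (p + q * x + r * x ^ 2 + s * x ^ 3) * Real.exp (-(b * x)))
        = ((p + q * c + r * c ^ 2 + s * c ^ 3) / b + (q + 2 * r * c + 3 * s * c ^ 2) / b ^ 2
            + (2 * r + 6 * s * c) / b ^ 3 + 6 * s / b ^ 4) * Real.exp (-(b * c)) ∧
      IntegrableOn (fun x => (p + q * x + r * x ^ 2 + s * x ^ 3) * Real.exp (-(b * x)))
        (Ioi c) := by
  set A : ℝ → ℝ := fun x => -((p + q * x + r * x ^ 2 + s * x ^ 3) / b
      + (q + 2 * r * x + 3 * s * x ^ 2) / b ^ 2 + (2 * r + 6 * s * x) / b ^ 3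
      + 6 * s / b ^ 4) with hA
  have hbne : b ≠ 0 := hb.ne'
  have hderiv : ∀ x ∈ Ici c, HasDerivAt (fun x => A x * Real.exp (-(b * x)))
      ((p + q * x + r * x ^ 2 + s * x ^ 3) * Real.exp (-(b * x))) x := by
    intro x _
    have hE : HasDerivAt (fun x : ℝ => Real.exp (-(b * x))) (Real.exp (-(b * x)) * (-b)) x := by
      have h : HasDerivAt (fun x : ℝ => -(b * x)) (-b) x := by
        have h0 := ((hasDerivAt_id x).const_mul b).neg
        rw [mul_one] at h0
        exact h0
      exact h.exp
    have hid : HasDerivAt (fun x : ℝ => x) 1 x := hasDerivAt_id x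
    have h1 : HasDerivAt (fun x : ℝ => x ^ 2) (2 * x) x := by simpa using hasDerivAt_pow 2 x
    have h2 : HasDerivAt (fun x : ℝ => x ^ 3) (3 * x ^ 2) x := by
      simpa using hasDerivAt_pow 3 x
    have d1 : HasDerivAt (fun x : ℝ => (p + q * x + r * x ^ 2 + s * x ^ 3) / b)
        ((0 + q * 1 + r * (2 * x) + s * (3 * x ^ 2)) / b) x :=
      ((((hasDerivAt_const x p).add (hid.const_mul q)).add (h1.const_mul r)).add
        (h2.const_mul s)).div_const b
    have d2 : HasDerivAt (fun x : ℝ => (q + 2 * r * x + 3 * s * x ^ 2) / b ^ 2)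
        ((0 + 2 * r * 1 + 3 * s * (2 * x)) / b ^ 2) x :=
      (((hasDerivAt_const x q).add (hid.const_mul (2 * r))).add
        (h1.const_mul (3 * s))).div_const (b ^ 2)
    have d3 : HasDerivAt (fun x : ℝ => (2 * r + 6 * s * x) / b ^ 3)
        ((0 + 6 * s * 1) / b ^ 3) x :=
      ((hasDerivAt_const x (2 * r)).add (hid.const_mul (6 * s))).div_const (b ^ 3)
    have d4 : HasDerivAt (fun _ : ℝ => 6 * s / b ^ 4) 0 x := hasDerivAt_const x _
    have hG := ((((d1.add d2).add d3).add d4).neg.mul hE)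
    convert hG using 1
    · rfl
    · rfl
    · rfl
    simp only [Pi.add_apply, Pi.neg_apply]
    field_simp
    ring
  have hpos' : ∀ x ∈ Ioi c, 0 ≤ (p + q * x + r * x ^ 2 + s * x ^ 3) * Real.exp (-(b * x)) :=
    fun x hx => mul_nonneg (hpos x hx) (Real.exp_nonneg _)
  have htend : Tendsto (fun x => A x * Real.exp (-(b * x))) atTop (𝓝 0) := by
    have hfun : (fun x => A x * Real.exp (-(b * x))) = fun x =>
        (-(p / b + q / b ^ 2 + 2 * r / b ^ 3 + 6 * s / b ^ 4)) *
            (x ^ 0 * Real.exp (-(b * x)))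
          + (-(q / b + 2 * r / b ^ 2 + 6 * s / b ^ 3)) * (x ^ 1 * Real.exp (-(b * x)))
          + (-(r / b + 3 * s / b ^ 2)) * (x ^ 2 * Real.exp (-(b * x)))
          + (-(s / b)) * (x ^ 3 * Real.exp (-(b * x))) := by
      funext x
      rw [hA]
      field_simp
      ring
    rw [hfun]
    have t0 := (aux_tendsto 0 hb).const_mul (-(p / b + q / b ^ 2 + 2 * r / b ^ 3 + 6 * s / b ^ 4))
    have t1 := (aux_tendsto 1 hb).const_mul (-(q / b + 2 * r / b ^ 2 + 6 * s / b ^ 3))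
    have t2 := (aux_tendsto 2 hb).const_mul (-(r / b + 3 * s / b ^ 2))
    have t3 := (aux_tendsto 3 hb).const_mul (-(s / b))
    simpa using ((t0.add t1).add t2).add t3
  refine ⟨?_, integrableOn_Ioi_deriv_of_nonneg' hderiv hpos' htend⟩
  rw [integral_Ioi_of_hasDerivAt_of_nonneg' hderiv hpos' htend, hA]
  ring

/-- Key computation for part (1), for nonnegative `a`. -/
private lemma key (lam : ℝ) (hlam : 0 < lam) (a : ℝ) (ha : 0 ≤ a) :
    (∫ u : ℝ, Real.exp (-(a + |u| + |a + u|) / lam))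
      = (lam + a) * Real.exp (-(2 * a) / lam) := by
  have hb : (0 : ℝ) < 2 / lam := by positivity
  set f : ℝ → ℝ := fun u => Real.exp (-(a + |u| + |a + u|) / lam) with hf
  set E : ℝ := Real.exp (-(2 * a) / lam) with hE
  -- the three pieces
  -- piece on Iic (-a)
  have heq1 : EqOn f (fun u => Real.exp (2 / lam * u)) (Iic (-a)) := by
    intro u hu
    simp only [mem_Iic] at hu
    have hu0 : u ≤ 0 := hu.trans (by linarith)
    have hau : a + u ≤ 0 := by linarith
    rw [hf]
    simp only
    rw [abs_of_nonpos hu0, abs_of_nonpos hau]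
    congr 1
    field_simp
    ring
  have hint1 : IntegrableOn (fun u : ℝ => Real.exp (2 / lam * u)) (Iic (-a)) := by
    rw [← (Measure.measurePreserving_neg (volume : Measure ℝ)).integrableOn_comp_preimage
        (Homeomorph.neg ℝ).measurableEmbedding]
    simp only [Function.comp_def, neg_preimage, neg_Iic, neg_neg]
    rw [integrableOn_Ici_iff_integrableOn_Ioi]
    have := exp_neg_integrableOn_Ioi a hb
    apply this.congr_fun _ measurableSet_Ioi
    intro x _
    simp only
    congr 1
    ring
  have hval1 : (∫ u in Iic (-a), Real.exp (2 / lam * u)) = lam / 2 * E := by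
    have hcomp := integral_comp_neg_Ioi a (fun x => Real.exp (2 / lam * x))
    rw [← hcomp]
    have hcongr : EqOn (fun x : ℝ => Real.exp (2 / lam * -x))
        (fun x : ℝ => (1 + 0 * x + 0 * x ^ 2 + 0 * x ^ 3) * Real.exp (-(2 / lam * x)))
        (Ioi a) := by
      intro x _
      simp only
      rw [mul_neg]
      ring
    rw [setIntegral_congr_fun measurableSet_Ioi hcongr,
      (master hb a 1 0 0 0 (fun x _ => by norm_num)).1, hE]
    have : -(2 / lam * a) = -(2 * a) / lam := by field_simp
    rw [this]
    field_simp
    ring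
  -- piece on Ioc (-a) 0
  have heq2 : EqOn f (fun _ => E) (Ioc (-a) 0) := by
    intro u hu
    obtain ⟨hu1, hu2⟩ := hu
    have hau : 0 ≤ a + u := by linarith
    rw [hf, hE]
    simp only
    rw [abs_of_nonpos hu2, abs_of_nonneg hau]
    congr 1
    ring
  have hint2 : IntegrableOn (fun _ : ℝ => E) (Ioc (-a) 0) :=
    integrableOn_const measure_Ioc_lt_top.ne
  have hval2 : (∫ _ in Ioc (-a) 0, E) = a * E := by
    rw [setIntegral_const, Real.volume_real_Ioc, smul_eq_mul]
    congr 1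
    rw [max_eq_left (by linarith)]
    ring
  -- piece on Ioi 0
  have heq3 : EqOn f
      (fun u => (E + 0 * u + 0 * u ^ 2 + 0 * u ^ 3) * Real.exp (-(2 / lam * u))) (Ioi 0) := by
    intro u hu
    have hu0 : (0 : ℝ) < u := hu
    have hau : 0 ≤ a + u := by linarith
    rw [hf, hE]
    simp only
    rw [abs_of_pos hu0, abs_of_nonneg hau]
    rw [show -(a + u + (a + u)) / lam = -(2 * a) / lam + -(2 / lam * u) by field_simp; ring,
      Real.exp_add]
    ring
  have hEpos : 0 < E := Real.exp_pos _
  obtain ⟨hval3', hint3'⟩ := master hb 0 E 0 0 0 (fun x _ => by simpa using hEpos.le)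
  have hint3 : IntegrableOn f (Ioi 0) := (hint3'.congr_fun heq3.symm measurableSet_Ioi)
  have hval3 : (∫ u in Ioi 0, f u) = lam / 2 * E := by
    rw [setIntegral_congr_fun measurableSet_Ioi heq3, hval3']
    simp only [mul_zero, zero_mul, neg_zero, Real.exp_zero]
    field_simp
    ring
  -- assemble
  have hIic : IntegrableOn f (Iic (-a)) := hint1.congr_fun heq1.symm measurableSet_Iic
  have hIoc : IntegrableOn f (Ioc (-a) 0) := hint2.congr_fun heq2.symm measurableSet_Ioc
  have hIoiA : IntegrableOn f (Ioi (-a)) := by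
    rw [← Ioc_union_Ioi_eq_Ioi (by linarith : -a ≤ (0 : ℝ))]
    exact hIoc.union hint3
  have hsplit2 : (∫ u in Ioi (-a), f u) = (∫ u in Ioc (-a) 0, f u) + ∫ u in Ioi 0, f u := by
    rw [← Ioc_union_Ioi_eq_Ioi (by linarith : -a ≤ (0 : ℝ)),
      setIntegral_union Ioc_disjoint_Ioi_same measurableSet_Ioi hIoc hint3]
  have hsplit1 : (∫ u in Iic (-a), f u) + (∫ u in Ioi (-a), f u) = ∫ u : ℝ, f u :=
    intervalIntegral.integral_Iic_add_Ioi hIic hIoiA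
  have h1 : (∫ u in Iic (-a), f u) = lam / 2 * E := by
    rw [setIntegral_congr_fun measurableSet_Iic heq1, hval1]
  have h2 : (∫ u in Ioc (-a) 0, f u) = a * E := by
    rw [setIntegral_congr_fun measurableSet_Ioc heq2, hval2]
  calc (∫ u : ℝ, f u) = (∫ u in Iic (-a), f u) + ∫ u in Ioi (-a), f u := hsplit1.symm
    _ = lam / 2 * E + (a * E + lam / 2 * E) := by rw [h1, hsplit2, h2, hval3]
    _ = (lam + a) * E := by ring

/-- Marginal density and variance of the conditional Laplace mechanism for `n = 3`:
(1) `∫_ℝ exp(−(|u₁|+|u₂|+|u₁+u₂|)/λ) du₂ = (λ + |u₁|)·exp(−2|u₁|/λ)`;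
(2) `h(u) = (2/(3λ²))·(λ + |u|)·exp(−2|u|/λ)` is a probability density with second
moment `(5/6)·λ²`; consequently the marginal variance `(5/6)λ²` of the conditioned
mechanism is smaller than the marginal variance `2λ²(1 − 1/3) = (4/3)λ²` of the imaged
(`L2`-projected) mechanism. -/
theorem conditional_laplace_marginal
    (lam : ℝ) (hlam : 0 < lam)
    (h : ℝ → ℝ)
    (hh : ∀ u, h u = 2 / (3 * lam ^ 2) * ((lam + |u|) * Real.exp (-(2 * |u|) / lam))) :
    (∀ u₁ : ℝ, ∫ u₂ : ℝ, Real.exp (-(|u₁| + |u₂| + |u₁ + u₂|) / lam)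
        = (lam + |u₁|) * Real.exp (-(2 * |u₁|) / lam)) ∧
      (∫ u : ℝ, h u) = 1 ∧
      (∫ u : ℝ, u ^ 2 * h u) = 5 / 6 * lam ^ 2 ∧
      5 / 6 * lam ^ 2 < 2 * lam ^ 2 * (1 - 1 / 3) := by
  have hb : (0 : ℝ) < 2 / lam := by positivity
  refine ⟨?_, ?_, ?_, by nlinarith [pow_pos hlam 2]⟩
  · intro u₁
    rcases le_or_gt 0 u₁ with hu | hu
    · rw [abs_of_nonneg hu]
      exact key lam hlam u₁ hu
    · have ha : (0 : ℝ) ≤ -u₁ := by linarith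
      have hfun : (fun u₂ : ℝ => Real.exp (-(|u₁| + |u₂| + |u₁ + u₂|) / lam))
          = fun u₂ => Real.exp (-(-u₁ + |-u₂| + |-u₁ + -u₂|) / lam) := by
        funext u₂
        congr 1
        rw [abs_of_neg hu, abs_neg, show -u₁ + -u₂ = -(u₁ + u₂) by ring, abs_neg]
      rw [hfun, integral_neg_eq_self (fun u => Real.exp (-(-u₁ + |u| + |-u₁ + u|) / lam)) volume,
        key lam hlam (-u₁) ha, abs_of_neg hu]
  · simp_rw [hh]
    rw [integral_comp_abs
      (f := fun t => 2 / (3 * lam ^ 2) * ((lam + t) * Real.exp (-(2 * t) / lam)))]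
    rw [MeasureTheory.integral_const_mul]
    have hcongr : EqOn (fun t : ℝ => (lam + t) * Real.exp (-(2 * t) / lam))
        (fun t : ℝ => (lam + 1 * t + 0 * t ^ 2 + 0 * t ^ 3) * Real.exp (-(2 / lam * t)))
        (Ioi 0) := by
      intro t _
      simp only
      rw [show -(2 * t) / lam = -(2 / lam * t) by field_simp]
      ring
    rw [setIntegral_congr_fun measurableSet_Ioi hcongr,
      (master hb 0 lam 1 0 0 (fun x hx => by
        have : (0 : ℝ) < x := hx
        nlinarith)).1]
    simp only [mul_zero, zero_mul, neg_zero, Real.exp_zero]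
    field_simp
    ring
  · have hfun : (fun u : ℝ => u ^ 2 * h u)
        = fun u => (fun t : ℝ => t ^ 2 *
            (2 / (3 * lam ^ 2) * ((lam + t) * Real.exp (-(2 * t) / lam)))) |u| := by
      funext u
      simp only
      rw [sq_abs, hh]
    rw [hfun, integral_comp_abs
      (f := fun t : ℝ => t ^ 2 * (2 / (3 * lam ^ 2) * ((lam + t) * Real.exp (-(2 * t) / lam))))]
    have hcongr : EqOn
        (fun t : ℝ => t ^ 2 * (2 / (3 * lam ^ 2) * ((lam + t) * Real.exp (-(2 * t) / lam))))
        (fun t : ℝ => 2 / (3 * lam ^ 2) *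
          ((0 + 0 * t + lam * t ^ 2 + 1 * t ^ 3) * Real.exp (-(2 / lam * t)))) (Ioi 0) := by
      intro t _
      simp only
      rw [show -(2 * t) / lam = -(2 / lam * t) by field_simp]
      ring
    rw [setIntegral_congr_fun measurableSet_Ioi hcongr, MeasureTheory.integral_const_mul,
      (master hb 0 0 0 lam 1 (fun x hx => by
        have : (0 : ℝ) < x := hx
        nlinarith)).1]
    simp only [mul_zero, zero_mul, neg_zero, Real.exp_zero]
    field_simp
    ring
end
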